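/- For every odd positive integer k, the alternating convolution sum of even zeta values vanishes: ∑_{m+l=k, m,l≥0} (−1)^m ζ(2m) ζ(2l) = 0, where the convention ζ(0) = −1/2 is used. -/

import Mathlib

/-- The Riemann zeta value `ζ(s) = ∑_{k>0} k^{-s}` for a natural number exponent,
with the convention `ζ(0) = −1/2`. -/
noncomputable def zetaE (s : ℕ) : ℝ :=
  if s = 0 then -1 / 2 else ∑' k : ℕ+, (1 : ℝ) / (k : ℝ) ^ s

theorem alternating_convolution_odd (k : ℕ) (hk : 0 < k) (hodd : Odd k) :
    ∑ p ∈ Finset.HasAntidiagonal.antidiagonal k, (-1 : ℝ) ^ p.1 * zetaE (2 * p.1) * zetaE (2 * p.2)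
      = 0 := by
  have hswap := Finset.Nat.sum_antidiagonal_swap
    (n := k) (f := fun p : ℕ × ℕ => (-1 : ℝ) ^ p.1 * zetaE (2 * p.1) * zetaE (2 * p.2))
  have key : ∑ p ∈ Finset.HasAntidiagonal.antidiagonal k,
      (-1 : ℝ) ^ p.1 * zetaE (2 * p.1) * zetaE (2 * p.2)
      = -∑ p ∈ Finset.HasAntidiagonal.antidiagonal k,
        (-1 : ℝ) ^ p.1 * zetaE (2 * p.1) * zetaE (2 * p.2) := by
    conv_lhs => rw [← hswap]
    rw [← Finset.sum_neg_distrib]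
    apply Finset.sum_congr rfl
    intro p hp
    rw [Finset.HasAntidiagonal.mem_antidiagonal] at hp
    have h1 : (-1 : ℝ) ^ p.2 = -(-1 : ℝ) ^ p.1 := by
      have : (-1 : ℝ) ^ (p.1 + p.2) = -1 := by
        rw [hp, hodd.neg_one_pow]
      rw [pow_add] at this
      rcases Nat.even_or_odd p.1 with h1 | h1
      · rw [h1.neg_one_pow] at this ⊢; linarith
      · rw [h1.neg_one_pow] at this ⊢; linarith
    simp only [Prod.fst_swap, Prod.snd_swap]
    rw [h1]; ring
  linarith
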